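/- With the notation above (V the N × N_r Vandermonde matrix with nodes α_1,…,α_N, G_n the N_r × N_r Vandermonde matrix with nodes α_n, α_{N+1},…,α_{N+N_r−1}, all N + N_r − 1 nodes pairwise distinct and nonzero, and S_n = V G_n^{-1}), for every subset S ⊆ {1,…,N} with |S| ≤ N_r, the submatrix of S_n consisting of the rows indexed by S has rank |S|. -/

import Mathlib

variable {F : Type} [Field F] {N r : ℕ}

/-- The `N × (r+1)` Vandermonde matrix `V` with nodes `α_1, …, α_N`. -/
def Vmat (α : Fin N → F) : Matrix (Fin N) (Fin (r + 1)) F :=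
  Matrix.of fun i j => α i ^ (j : ℕ)

/-- The `(r+1) × (r+1)` Vandermonde matrix `G_n` with row nodes
`α_n, β_1, …, β_r` (where `β_i` plays the role of `α_{N+i}`). -/
def Gmat (α : Fin N → F) (β : Fin r → F) (n : Fin N) :
    Matrix (Fin (r + 1)) (Fin (r + 1)) F :=
  Matrix.of fun i j => ((Fin.cons (α n) β : Fin (r + 1) → F) i) ^ (j : ℕ)

/-- The `(r+1) × r` matrix `G̃` whose first row is zero and whose row `i+1`
is the Vandermonde row `(1, β_i, …, β_i^{r-1})`. -/
def Gtil (β : Fin r → F) : Matrix (Fin (r + 1)) (Fin r) F :=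
  Matrix.of fun i j => ((Fin.cons 0 (fun i' => β i' ^ (j : ℕ)) : Fin (r + 1) → F) i)

/-- The matrix `S_n = V · G_n⁻¹`. -/
noncomputable def Smat (α : Fin N → F) (β : Fin r → F) (n : Fin N) :
    Matrix (Fin N) (Fin (r + 1)) F :=
  Vmat α * (Gmat α β n)⁻¹

/-- Any set `S` of at most `N_r = r+1` rows of `S_n = V G_n⁻¹`
has rank `|S|`. -/
theorem Smat_row_submatrix_rank
    {F : Type} [Field F] (N r : ℕ) (hN : 1 ≤ N)
    (α : Fin N → F) (β : Fin r → F)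
    (hinj : Function.Injective (Sum.elim α β))
    (h0 : ∀ x : Fin N ⊕ Fin r, Sum.elim α β x ≠ 0)
    (n : Fin N)
    (S : Finset (Fin N)) (hS : S.card ≤ r + 1) :
    ((Smat α β n).submatrix
      (fun i : Fin S.card => ((S.orderIsoOfFin rfl i : S) : Fin N)) id).rank = S.card := by
  classical
  set e : Fin S.card → Fin N := fun i => ((S.orderIsoOfFin rfl i : S) : Fin N) with he
  have heinj : Function.Injective e := by
    intro i j h
    exact (S.orderIsoOfFin rfl).injective (Subtype.ext h)
  have hαinj : Function.Injective α := fun i j h => by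
    simpa using hinj (a₁ := Sum.inl i) (a₂ := Sum.inl j) (by simpa using h)
  -- G is invertible
  have hGinj : Function.Injective (Fin.cons (α n) β : Fin (r + 1) → F) := by
    intro i j h
    induction i using Fin.cases <;> induction j using Fin.cases <;>
      simp only [Fin.cons_zero, Fin.cons_succ] at h
    · rfl
    · exact absurd (hinj (a₁ := Sum.inl n) (a₂ := Sum.inr _) (by simpa using h)) (by simp)
    · exact absurd (hinj (a₁ := Sum.inr _) (a₂ := Sum.inl n) (by simpa using h)) (by simp)
    · have := hinj (a₁ := Sum.inr _) (a₂ := Sum.inr _) (by simpa using h)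
      simpa using congrArg Fin.succ (Sum.inr.inj this)
  have hGdet : IsUnit (Gmat α β n).det := by
    have : Gmat α β n = Matrix.vandermonde (Fin.cons (α n) β) := rfl
    rw [this]
    exact (Matrix.det_vandermonde_ne_zero_iff.mpr hGinj).isUnit
  have hGinvdet : IsUnit ((Gmat α β n)⁻¹).det := by
    exact Matrix.isUnit_nonsing_inv_det _ hGdet
  -- split off G⁻¹
  have hsplit : (Smat α β n).submatrix e id
      = (Vmat α).submatrix e id * (Gmat α β n)⁻¹ := by
    rw [Smat]
    exact (Matrix.submatrix_mul_equiv (Vmat α) ((Gmat α β n)⁻¹) e (Equiv.refl _) id).symm.trans (by simp; rfl)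
  rw [hsplit]
  refine (Matrix.rank_mul_eq_left_of_isUnit_det _ _ hGinvdet).trans ?_
  -- the Vandermonde row-submatrix has full row rank
  set A : Matrix (Fin S.card) (Fin (r + 1)) F := (Vmat α).submatrix e id with hA
  refine le_antisymm (A.rank_le_card_height.trans (by simp)) ?_
  set g : Fin S.card → Fin (r + 1) := Fin.castLE hS with hg
  have hB : A.submatrix id g = Matrix.vandermonde (fun i => α (e i)) := by
    ext i j
    simp [hA, Vmat, Matrix.vandermonde, hg]
  have hBrank : (A.submatrix id g).rank = S.card := by
    rw [hB]
    have hdet : IsUnit (Matrix.vandermonde (fun i => α (e i))).det :=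
      (Matrix.det_vandermonde_ne_zero_iff.mpr (hαinj.comp heinj)).isUnit
    simpa using Matrix.rank_of_isUnit _ ((Matrix.isUnit_iff_isUnit_det _).mpr hdet)
  have : A.submatrix id g = A * (1 : Matrix (Fin (r + 1)) (Fin (r + 1)) F).submatrix
      (Equiv.refl _) g := by
    rw [Matrix.mul_submatrix_one]
    rfl
  calc (S.card : ℕ) = (A.submatrix id g).rank := hBrank.symm
    _ ≤ A.rank := by rw [this]; exact Matrix.rank_mul_le_left _ _
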